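/- Under reversed SIC order (user 2 decoded first), substituting user 2's QoS constraint at equality P_1 = kP_2 + b with k = g_2/((2^{R_2^min}−1)g_1) and b = −σ²/g_1 reduces the two-variable EE to the single-variable function f(P_2) = log₂(1 + ((kP_2+b)g_1 + P_2 g_2)/σ²) / (P_f + kP_2 + P_2 + b), and f simplifies to f(P_2) = log₂(2^{R_2^min} P_2 g_2 / ((2^{R_2^min}−1)σ²)) / (P_f + (k+1)P_2 + b) on the domain where the argument of the log exceeds 1; moreover f is strictly pseudo-concave on that domain. -/

import Mathlib

theorem reversed_sic_single_variable (g1 g2 σ2 Pf R2min k b : ℝ)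
    (hg : g2 ≤ g1) (hg2 : 0 < g2) (hσ : 0 < σ2) (hPf : 0 < Pf) (hR2 : 0 < R2min)
    (hk : k = g2 / (((2:ℝ) ^ R2min - 1) * g1))
    (hb : b = -σ2 / g1)
    (f : ℝ → ℝ)
    (hf : f = fun P2 => Real.logb 2 (1 + ((k * P2 + b) * g1 + P2 * g2) / σ2)
      / (Pf + k * P2 + P2 + b))
    (Dom : Set ℝ)
    (hDom : Dom = {P2 : ℝ |
      1 < (2:ℝ) ^ R2min * P2 * g2 / (((2:ℝ) ^ R2min - 1) * σ2) ∧
      0 < Pf + k * P2 + P2 + b}) :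
    (∀ P2 : ℝ, (k * P2 + b) * g1 + P2 * g2
        = (2:ℝ) ^ R2min * P2 * g2 / ((2:ℝ) ^ R2min - 1) - σ2) ∧
    (∀ P2 ∈ Dom, f P2 =
      Real.logb 2 ((2:ℝ) ^ R2min * P2 * g2 / (((2:ℝ) ^ R2min - 1) * σ2))
        / (Pf + (k + 1) * P2 + b)) ∧
    (∀ x ∈ Dom, ∀ y ∈ Dom, x ≠ y → f x ≤ f y → 0 < deriv f x * (y - x)) := by
  have hg1 : 0 < g1 := lt_of_lt_of_le hg2 hg
  have h2R : (1:ℝ) < (2:ℝ) ^ R2min := by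
    have := Real.rpow_lt_rpow_left_iff (x := (2:ℝ)) (y := 0) (z := R2min) (by norm_num)
    simpa [Real.rpow_zero] using this.mpr hR2
  have hE : 0 < (2:ℝ) ^ R2min - 1 := by linarith
  -- Part 1
  have part1 : ∀ P2 : ℝ, (k * P2 + b) * g1 + P2 * g2
      = (2:ℝ) ^ R2min * P2 * g2 / ((2:ℝ) ^ R2min - 1) - σ2 := by
    intro P2
    rw [hk, hb]
    field_simp
    ring
  -- abbreviations
  set c : ℝ := (2:ℝ) ^ R2min * g2 / (((2:ℝ) ^ R2min - 1) * σ2) with hc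
  have hcpos : 0 < c := by positivity
  set e : ℝ := k + 1 with he
  have hepos : 0 < e := by
    have : 0 < k := by rw [hk]; positivity
    linarith
  have hcP : ∀ P2 : ℝ, (2:ℝ) ^ R2min * P2 * g2 / (((2:ℝ) ^ R2min - 1) * σ2) = c * P2 := by
    intro P2; rw [hc]; ring
  -- rewrite f
  have hf' : f = fun P2 => Real.log (c * P2) / Real.log 2 / (e * P2 + (Pf + b)) := by
    rw [hf]; funext P2
    have h1 : (1:ℝ) + ((k * P2 + b) * g1 + P2 * g2) / σ2 = c * P2 := by
      rw [part1, ← hcP P2]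
      field_simp
      ring
    have h2 : Pf + k * P2 + P2 + b = e * P2 + (Pf + b) := by rw [he]; ring
    rw [h1, h2, Real.logb]
  have part2 : ∀ P2 ∈ Dom, f P2 =
      Real.logb 2 ((2:ℝ) ^ R2min * P2 * g2 / (((2:ℝ) ^ R2min - 1) * σ2))
        / (Pf + (k + 1) * P2 + b) := by
    intro P2 _
    rw [hf', hcP, Real.logb]
    have h2 : Pf + (k + 1) * P2 + b = e * P2 + (Pf + b) := by rw [he]; ring
    rw [h2]
  refine ⟨part1, part2, ?_⟩
  intro x hx y hy hxy hfle
  rw [hDom] at hx hy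
  obtain ⟨hx1, hx2⟩ := hx
  obtain ⟨hy1, hy2⟩ := hy
  rw [hcP] at hx1 hy1
  have hhx : 0 < e * x + (Pf + b) := by rw [he]; linarith
  have hhy : 0 < e * y + (Pf + b) := by rw [he]; linarith
  have hxpos : 0 < x := by
    by_contra h
    push_neg at h
    nlinarith
  have hypos : 0 < y := by
    by_contra h
    push_neg at h
    nlinarith
  have hL : 0 < Real.log 2 := Real.log_pos (by norm_num)
  -- derivative
  have hder : HasDerivAt f
      (((c / (c * x)) / Real.log 2 * (e * x + (Pf + b))
        - Real.log (c * x) / Real.log 2 * e) / (e * x + (Pf + b)) ^ 2) x := by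
    rw [hf']
    have h1 : HasDerivAt (fun P2 : ℝ => c * P2) (c * 1) x := (hasDerivAt_id x).const_mul c
    have h2 : HasDerivAt (fun P2 : ℝ => Real.log (c * P2)) (c * 1 / (c * x)) x :=
      h1.log (by positivity)
    have h3 : HasDerivAt (fun P2 : ℝ => Real.log (c * P2) / Real.log 2)
        (c * 1 / (c * x) / Real.log 2) x := h2.div_const _
    have h4 : HasDerivAt (fun P2 : ℝ => e * P2 + (Pf + b)) (e * 1) x :=
      ((hasDerivAt_id x).const_mul e).add_const _
    have := h3.div h4 (ne_of_gt hhx)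
    simp only [mul_one] at this
    exact this
  rw [hder.deriv]
  have hcx1 : (1:ℝ) < c * x := hx1
  have hlogcx : 0 < Real.log (c * x) := Real.log_pos hcx1
  -- strict concavity of log
  have hconc : Real.log (c * y) < Real.log (c * x) + (y - x) / x := by
    have hne : y / x ≠ 1 := by
      intro h
      apply hxy
      field_simp at h
      linarith
    have := Real.log_lt_sub_one_of_pos (by positivity : 0 < y / x) hne
    rw [Real.log_div (ne_of_gt hypos) (ne_of_gt hxpos)] at this
    rw [Real.log_mul (ne_of_gt hcpos) (ne_of_gt hypos),
        Real.log_mul (ne_of_gt hcpos) (ne_of_gt hxpos)]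
    have hx' : (y - x) / x = y / x - 1 := by field_simp
    linarith [hx'.ge]
  have hconc' : x * Real.log (c * y) < x * Real.log (c * x) + (y - x) := by
    have h := mul_lt_mul_of_pos_left hconc hxpos
    have hid : x * ((y - x) / x) = y - x := by field_simp
    rw [mul_add, hid] at h
    exact h
  -- from f x ≤ f y
  have hmul : Real.log (c * x) * (e * y + (Pf + b)) ≤ Real.log (c * y) * (e * x + (Pf + b)) := by
    rw [hf'] at hfle
    simp only at hfle
    rw [div_le_div_iff₀ hhx hhy] at hfle
    have := mul_le_mul_of_nonneg_right hfle hL.le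
    calc Real.log (c * x) * (e * y + (Pf + b))
        = (Real.log (c * x) / Real.log 2 * (e * y + (Pf + b))) * Real.log 2 := by
          field_simp
      _ ≤ (Real.log (c * y) / Real.log 2 * (e * x + (Pf + b))) * Real.log 2 := this
      _ = Real.log (c * y) * (e * x + (Pf + b)) := by field_simp
  -- key inequality
  have hkey : 0 < (y - x) * ((e * x + (Pf + b)) - x * e * Real.log (c * x)) := by
    have A := mul_le_mul_of_nonneg_left hmul hxpos.le
    have B := mul_lt_mul_of_pos_right hconc' hhx
    nlinarith [A, B]
  have hcne : c * x ≠ 0 := by positivity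
  have hderpos : (((c / (c * x)) / Real.log 2 * (e * x + (Pf + b))
        - Real.log (c * x) / Real.log 2 * e) / (e * x + (Pf + b)) ^ 2) * (y - x)
      = (y - x) * ((e * x + (Pf + b)) - x * e * Real.log (c * x))
        / (x * Real.log 2 * (e * x + (Pf + b)) ^ 2) := by
    have hxne : x ≠ 0 := ne_of_gt hxpos
    have hLne : Real.log 2 ≠ 0 := ne_of_gt hL
    have hhne : e * x + (Pf + b) ≠ 0 := ne_of_gt hhx
    field_simp
  rw [hderpos]
  positivity
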